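/- Starting from any capital x > 0 with positive fractional part, repeatedly applying the winning step x ↦ x + (1/2){x} eventually increases the capital by at least 1: there exists n such that after n winning steps the capital exceeds x + 1, provided {x} > 0. Equivalently, the sequence x_{t+1} = x_t + (1/2){x_t} with x_0 = x and {x} > 0 satisfies x_t → ∞. -/

import Mathlib

open Filter

/-- Starting from an irrational capital x > 0 (so all fractional parts along the way are
positive), repeatedly winning the bet of half the fractional part drives the capital to
infinity; in particular it eventually exceeds x + 1. -/
theorem stmt7 (x : ℝ) (hx : 0 < x) (hirr : Irrational x)
    (f : ℕ → ℝ) (hf0 : f 0 = x)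
    (hf : ∀ t, f (t + 1) = f t + (1/2 : ℝ) * Int.fract (f t)) :
    (∃ n, x + 1 < f n) ∧ Tendsto f atTop atTop := by
  -- all iterates are irrational
  have hirr' : ∀ t, Irrational (f t) := by
    intro t
    induction t with
    | zero => rwa [hf0]
    | succ t ih =>
      have h1 : f (t + 1) = ((3/2 : ℚ) : ℝ) * f t - ((((⌊f t⌋ : ℚ)) / 2 : ℚ) : ℝ) := by
        rw [hf t, Int.fract]; push_cast; ring
      rw [h1]
      exact (ih.ratCast_mul (by norm_num)).sub_ratCast _
  have gpos : ∀ t, 0 < Int.fract (f t) := by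
    intro t
    rcases lt_or_eq_of_le (Int.fract_nonneg (f t)) with h | h
    · exact h
    · exfalso
      have : f t = (⌊f t⌋ : ℝ) := by
        have := Int.fract (f t)
        rw [Int.fract] at h; linarith
      exact (hirr' t).ne_int ⌊f t⌋ this
  have hmono : StrictMono f := by
    apply strictMono_nat_of_lt_succ
    intro t
    rw [hf t]
    have := gpos t
    linarith
  -- while fract < 2/3 it multiplies by 3/2
  have key : ∀ t, Int.fract (f t) < 2/3 →
      Int.fract (f (t+1)) = (3/2) * Int.fract (f t) := by
    intro t h
    have h1 : f (t+1) = (⌊f t⌋ : ℝ) + (3/2) * Int.fract (f t) := by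
      rw [hf t, Int.fract]; ring
    rw [h1, Int.fract_intCast_add]
    refine Int.fract_eq_self.2 ⟨by have := Int.fract_nonneg (f t); linarith, by linarith⟩
  -- eventually fract exceeds 2/3
  have exists_big : ∀ t, ∃ s, t ≤ s ∧ 2/3 ≤ Int.fract (f s) := by
    intro t
    by_contra hcon
    push_neg at hcon
    have hpow : ∀ k, Int.fract (f (t + k)) = (3/2)^k * Int.fract (f t) := by
      intro k
      induction k with
      | zero => simp
      | succ k ih =>
        have : t + (k+1) = (t+k) + 1 := by omega
        rw [this, key _ (hcon _ (by omega)), ih]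
        ring
    obtain ⟨k, hk⟩ := pow_unbounded_of_one_lt (1 / Int.fract (f t)) (by norm_num : (1:ℝ) < 3/2)
    have h1 : 1 < Int.fract (f (t + k)) := by
      rw [hpow k]
      have hg := gpos t
      rw [div_lt_iff₀ hg] at hk
      nlinarith
    have := Int.fract_lt_one (f (t + k))
    linarith
  -- grows by at least 1/3 infinitely often
  have grow : ∀ n : ℕ, ∃ t, x + n/3 ≤ f t := by
    intro n
    induction n with
    | zero => exact ⟨0, by simp [hf0]⟩
    | succ n ih =>
      obtain ⟨t, ht⟩ := ih
      obtain ⟨s, hts, hs⟩ := exists_big t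
      refine ⟨s + 1, ?_⟩
      have h1 : f t ≤ f s := hmono.monotone hts
      have h2 : f (s+1) = f s + (1/2) * Int.fract (f s) := hf s
      push_cast
      linarith
  refine ⟨?_, ?_⟩
  · obtain ⟨t, ht⟩ := grow 4
    exact ⟨t, by push_cast at ht; linarith⟩
  · apply tendsto_atTop_atTop_of_monotone hmono.monotone
    intro b
    obtain ⟨t, ht⟩ := grow ⌈3 * (b - x)⌉₊
    refine ⟨t, ?_⟩
    have := Nat.le_ceil (3 * (b - x))
    linarith
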